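/- Let E be a nonempty closed convex subset of a Banach space X and T : E → E a contractive-like operator with fixed point p. Let {α_n}, {β_n} ⊂ [0,1) with ∑ α_n = ∞. Define the S-iteration: x_0 ∈ E, y_n = (1 − β_n) x_n + β_n T x_n, x_{n+1} = (1 − α_n) T x_n + α_n T y_n. Then x_n converges to the unique fixed point p of T. -/

import Mathlib

open Filter Topology

theorem S_iteration_converges
    {X : Type*} [NormedAddCommGroup X] [NormedSpace ℝ X] [CompleteSpace X]
    (E : Set X) (hEne : E.Nonempty) (hEcl : IsClosed E) (hEco : Convex ℝ E)
    (T : X → X) (hT : Set.MapsTo T E E)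
    (δ : ℝ) (hδ : δ ∈ Set.Ico (0 : ℝ) 1)
    (φ : ℝ → ℝ) (hφmono : StrictMonoOn φ (Set.Ici 0))
    (hφcont : ContinuousOn φ (Set.Ici 0)) (hφ0 : φ 0 = 0)
    (hcontr : ∀ x ∈ E, ∀ y ∈ E, ‖T x - T y‖ ≤ δ * ‖x - y‖ + φ ‖x - T x‖)
    (p : X) (hp : p ∈ E) (hTp : T p = p)
    (α β : ℕ → ℝ)
    (hα : ∀ n, α n ∈ Set.Ico (0 : ℝ) 1)
    (hβ : ∀ n, β n ∈ Set.Ico (0 : ℝ) 1)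
    (hαdiv : Tendsto (fun N => ∑ n ∈ Finset.range N, α n) atTop atTop)
    (x y : ℕ → X) (hx0 : x 0 ∈ E)
    (hy : ∀ n, y n = (1 - β n) • x n + β n • T (x n))
    (hx : ∀ n, x (n + 1) = (1 - α n) • T (x n) + α n • T (y n)) :
    Tendsto x atTop (𝓝 p) ∧ ∀ q ∈ E, T q = q → q = p := by
  obtain ⟨hδ0, hδ1⟩ := hδ
  -- key contraction toward p
  have hc : ∀ z ∈ E, ‖T z - p‖ ≤ δ * ‖z - p‖ := by
    intro z hz
    have h := hcontr p hp z hz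
    rw [hTp, sub_self, norm_zero, hφ0, add_zero, norm_sub_rev, norm_sub_rev p z] at h
    exact h
  -- membership of x n and y n in E
  have hmem : ∀ n, x n ∈ E ∧ y n ∈ E := by
    intro n
    induction n with
    | zero =>
      refine ⟨hx0, ?_⟩
      rw [hy 0]
      exact hEco hx0 (hT hx0) (by linarith [(hβ 0).1, (hβ 0).2]) (hβ 0).1 (by ring)
    | succ n ih =>
      have hxn : x (n + 1) ∈ E := by
        rw [hx n]
        exact hEco (hT ih.1) (hT ih.2) (by linarith [(hα n).1, (hα n).2]) (hα n).1 (by ring)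
      refine ⟨hxn, ?_⟩
      rw [hy (n + 1)]
      exact hEco hxn (hT hxn)
        (by linarith [(hβ (n+1)).1, (hβ (n+1)).2]) (hβ (n+1)).1 (by ring)
  -- one step contraction
  have hstep : ∀ n, ‖x (n + 1) - p‖ ≤ δ * ‖x n - p‖ := by
    intro n
    obtain ⟨ha0, ha1⟩ := hα n
    obtain ⟨hb0, hb1⟩ := hβ n
    have hyb : ‖y n - p‖ ≤ ‖x n - p‖ := by
      have hrw : y n - p = (1 - β n) • (x n - p) + β n • (T (x n) - p) := by
        rw [hy n]; module
      calc ‖y n - p‖ ≤ ‖(1 - β n) • (x n - p)‖ + ‖β n • (T (x n) - p)‖ := by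
            rw [hrw]; exact norm_add_le _ _
        _ = (1 - β n) * ‖x n - p‖ + β n * ‖T (x n) - p‖ := by
            rw [norm_smul, norm_smul, Real.norm_eq_abs, Real.norm_eq_abs,
              abs_of_nonneg (by linarith), abs_of_nonneg hb0]
        _ ≤ (1 - β n) * ‖x n - p‖ + β n * (δ * ‖x n - p‖) := by
            have := hc (x n) (hmem n).1
            nlinarith
        _ ≤ ‖x n - p‖ := by nlinarith [mul_nonneg (mul_nonneg hb0 (sub_nonneg.mpr hδ1.le)) (norm_nonneg (x n - p))]
    have hrw : x (n + 1) - p = (1 - α n) • (T (x n) - p) + α n • (T (y n) - p) := by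
      rw [hx n]; module
    calc ‖x (n + 1) - p‖ ≤ ‖(1 - α n) • (T (x n) - p)‖ + ‖α n • (T (y n) - p)‖ := by
          rw [hrw]; exact norm_add_le _ _
      _ = (1 - α n) * ‖T (x n) - p‖ + α n * ‖T (y n) - p‖ := by
          rw [norm_smul, norm_smul, Real.norm_eq_abs, Real.norm_eq_abs,
            abs_of_nonneg (by linarith), abs_of_nonneg ha0]
      _ ≤ (1 - α n) * (δ * ‖x n - p‖) + α n * (δ * ‖y n - p‖) := by
          have h1 := hc (x n) (hmem n).1
          have h2 := hc (y n) (hmem n).2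
          nlinarith
      _ ≤ δ * ‖x n - p‖ := by nlinarith [mul_nonneg (mul_nonneg ha0 hδ0) (sub_nonneg.mpr hyb)]
  -- geometric bound
  have hbound : ∀ n, ‖x n - p‖ ≤ δ ^ n * ‖x 0 - p‖ := by
    intro n
    induction n with
    | zero => simp
    | succ n ih =>
      calc ‖x (n + 1) - p‖ ≤ δ * ‖x n - p‖ := hstep n
        _ ≤ δ * (δ ^ n * ‖x 0 - p‖) := by nlinarith
        _ = δ ^ (n + 1) * ‖x 0 - p‖ := by ring
  constructor
  · rw [tendsto_iff_norm_sub_tendsto_zero]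
    have hgeo : Tendsto (fun n => δ ^ n * ‖x 0 - p‖) atTop (𝓝 0) := by
      have := (tendsto_pow_atTop_nhds_zero_of_lt_one hδ0 hδ1).mul_const ‖x 0 - p‖
      simpa using this
    exact squeeze_zero (fun n => norm_nonneg _) hbound hgeo
  · intro q hq hTq
    have h := hc q hq
    rw [hTq] at h
    have : ‖q - p‖ = 0 := by nlinarith [norm_nonneg (q - p)]
    have := norm_sub_eq_zero_iff.mp this
    exact this
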